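/- Let P be a finite set of points in the Euclidean plane ℝ², and let G be the unit disk graph on P (distinct points u, v are adjacent iff their Euclidean distance is at most 1). Let T be a tree subgraph of G spanning M ⊆ P with at least one internal node, and let C ⊆ M be an independent set of G. Then |C| ≤ 5·|in(T)|. -/

import Mathlib

namespace MEGCOM

/-- The set of internal nodes (degree at least 2) of a subgraph `T`. -/
def inn {V : Type*} {G : SimpleGraph V} (T : G.Subgraph) : Set V :=
  {v | v ∈ T.verts ∧ 2 ≤ (T.neighborSet v).ncard}

/-- `C` is a guardian set for `M` in `G`: every member of `M` lies in `C` or is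
adjacent in `G` to some vertex of `C`. -/
def IsGuardianSet {V : Type*} (G : SimpleGraph V) (M C : Set V) : Prop :=
  ∀ u ∈ M, u ∈ C ∨ ∃ c ∈ C, G.Adj u c

/-- The unit disk graph on a finite set of points in the Euclidean plane. -/
def unitDiskGraph (P : Finset (EuclideanSpace ℝ (Fin 2))) : SimpleGraph P where
  Adj u v := u ≠ v ∧
    dist (u : EuclideanSpace ℝ (Fin 2)) (v : EuclideanSpace ℝ (Fin 2)) ≤ 1
  symm := ⟨fun u v ⟨h, hd⟩ => ⟨h.symm, by rwa [dist_comm]⟩⟩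
  loopless := ⟨fun v h => h.1 rfl⟩


open Real in
lemma real5 (s : Finset ℝ) (hs : ∀ θ ∈ s, θ ∈ Set.Ioc (-π) π)
    (h : ∀ a ∈ s, ∀ b ∈ s, a ≠ b → Real.cos (a - b) < 1/2) : s.card ≤ 5 := by
  by_contra hlt
  push_neg at hlt
  obtain ⟨t, hts, ht6⟩ := Finset.exists_subset_card_eq hlt
  set e := t.orderIsoOfFin ht6 with he
  set θ : Fin 6 → ℝ := fun i => ((e i : t) : ℝ) with hθ
  have hmono : StrictMono θ := by
    intro i j hij
    exact e.strictMono hij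
  have hmem : ∀ i, θ i ∈ s := fun i => hts (e i).2
  have key : ∀ i j : Fin 6, i < j → π / 3 < θ j - θ i := by
    intro i j hij
    have hlt' := hmono hij
    by_contra hle
    push_neg at hle
    have hne : θ i ≠ θ j := ne_of_lt hlt'
    have hc := h _ (hmem j) _ (hmem i) (fun hh => hne hh.symm)
    have : Real.cos (π/3) ≤ Real.cos (θ j - θ i) := by
      apply Real.cos_le_cos_of_nonneg_of_le_pi (by linarith) _ hle
      linarith [Real.pi_pos]
    rw [Real.cos_pi_div_three] at this
    linarith
  have g0 := key 0 1 (by decide)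
  have g1 := key 1 2 (by decide)
  have g2 := key 2 3 (by decide)
  have g3 := key 3 4 (by decide)
  have g4 := key 4 5 (by decide)
  have hbig : 5 * π / 3 < θ 5 - θ 0 := by linarith
  have h0 := hs _ (hmem 0)
  have h5 := hs _ (hmem 5)
  have hΔ : θ 5 - θ 0 < 2 * π := by
    obtain ⟨h0a, h0b⟩ := h0; obtain ⟨h5a, h5b⟩ := h5; linarith
  have hc := h _ (hmem 5) _ (hmem 0) (ne_of_gt (hmono (by decide : (0:Fin 6) < 5)))
  have : Real.cos (π/3) ≤ Real.cos (2 * π - (θ 5 - θ 0)) := by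
    apply Real.cos_le_cos_of_nonneg_of_le_pi (by linarith) (by linarith [Real.pi_pos]) (by linarith)
  rw [Real.cos_pi_div_three, Real.cos_two_pi_sub] at this
  linarith

lemma pair_cos {a b : ℂ} (ha : a ≠ 0) (hb : b ≠ 0) (ha1 : ‖a‖ ≤ 1)
    (hb1 : ‖b‖ ≤ 1) (hd : 1 < ‖a - b‖) :
    Real.cos (Complex.arg a - Complex.arg b) < 1/2 := by
  set ra := ‖a‖ with hra
  set rb := ‖b‖ with hrb
  have hra0 : 0 < ra := norm_pos_iff.mpr ha
  have hrb0 : 0 < rb := norm_pos_iff.mpr hb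
  have hcos : Real.cos (Complex.arg a - Complex.arg b)
      = (a.re * b.re + a.im * b.im) / (ra * rb) := by
    rw [Real.cos_sub, Complex.cos_arg ha, Complex.sin_arg, Complex.cos_arg hb,
      Complex.sin_arg]
    field_simp
    rw [hra, hrb]; ring
  have hsq : ‖a - b‖ ^ 2 = ra^2 + rb^2 - 2 * (a.re * b.re + a.im * b.im) := by
    rw [hra, hrb, Complex.sq_norm, Complex.sq_norm, Complex.sq_norm,
      Complex.normSq_apply, Complex.normSq_apply, Complex.normSq_apply,
      Complex.sub_re, Complex.sub_im]
    ring
  have h1 : 1 < ‖a - b‖ ^ 2 := by nlinarith [norm_nonneg (a-b)]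
  rw [hcos, div_lt_iff₀ (by positivity)]
  nlinarith

lemma cx5 (S : Finset ℂ) (h1 : ∀ z ∈ S, z ≠ 0 ∧ ‖z‖ ≤ 1)
    (h2 : ∀ a ∈ S, ∀ b ∈ S, a ≠ b → 1 < ‖a - b‖) : S.card ≤ 5 := by
  have key : ∀ a ∈ S, ∀ b ∈ S, a ≠ b →
      Real.cos (Complex.arg a - Complex.arg b) < 1/2 := fun a haS b hbS hab =>
    pair_cos (h1 a haS).1 (h1 b hbS).1 (h1 a haS).2 (h1 b hbS).2 (h2 a haS b hbS hab)
  have hinj : Set.InjOn Complex.arg S := by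
    intro a haS b hbS hab
    by_contra hne
    have := key a haS b hbS hne
    rw [hab, sub_self, Real.cos_zero] at this
    linarith
  have hcard : (S.image Complex.arg).card = S.card := Finset.card_image_of_injOn hinj
  rw [← hcard]
  apply real5
  · intro θ hθ
    obtain ⟨a, _, rfl⟩ := Finset.mem_image.mp hθ
    exact ⟨Complex.neg_pi_lt_arg a, Complex.arg_le_pi a⟩
  · intro α hα β hβ hαβ
    obtain ⟨a, haS, rfl⟩ := Finset.mem_image.mp hα
    obtain ⟨b, hbS, rfl⟩ := Finset.mem_image.mp hβ
    exact key a haS b hbS (fun h => hαβ (by rw [h]))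

lemma euc5 (v : EuclideanSpace ℝ (Fin 2)) (S : Finset (EuclideanSpace ℝ (Fin 2)))
    (h1 : ∀ c ∈ S, c ≠ v ∧ dist c v ≤ 1)
    (h2 : ∀ a ∈ S, ∀ b ∈ S, a ≠ b → 1 < dist a b) : S.card ≤ 5 := by
  set φ : EuclideanSpace ℝ (Fin 2) → ℂ := fun c => ⟨c 0 - v 0, c 1 - v 1⟩ with hφ
  have hdist : ∀ a b : EuclideanSpace ℝ (Fin 2), ‖φ a - φ b‖ = dist a b := by
    intro a b
    rw [EuclideanSpace.dist_eq, Complex.norm_def, Complex.normSq_apply]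
    simp only [hφ, Complex.sub_re, Complex.sub_im, Real.dist_eq, Fin.sum_univ_two, sq_abs]
    congr 1
    ring
  have habs : ∀ c : EuclideanSpace ℝ (Fin 2), ‖φ c‖ = dist c v := by
    intro c
    have h0 : φ v = 0 := by simp [hφ, Complex.ext_iff]
    have := hdist c v
    rwa [h0, sub_zero] at this
  have hinj : Set.InjOn φ S := by
    intro a haS b hbS hab
    by_contra hne
    have := h2 a haS b hbS hne
    rw [← hdist, hab, sub_self, norm_zero] at this
    linarith
  have hcard : (S.image φ).card = S.card := Finset.card_image_of_injOn hinj
  rw [← hcard]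
  apply cx5
  · intro z hz
    obtain ⟨c, hcS, rfl⟩ := Finset.mem_image.mp hz
    refine ⟨?_, by rw [habs]; exact (h1 c hcS).2⟩
    intro h0
    have := habs c
    rw [h0, norm_zero] at this
    exact (h1 c hcS).1 (dist_eq_zero.mp this.symm)
  · intro x hx y hy hxy
    obtain ⟨a, haS, rfl⟩ := Finset.mem_image.mp hx
    obtain ⟨b, hbS, rfl⟩ := Finset.mem_image.mp hy
    rw [hdist]
    exact h2 a haS b hbS (fun h => hxy (by rw [h]))

lemma aux_reach {W : Type*} {H : SimpleGraph W} {a b : W} (hab : a ≠ b)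
    (r : H.Reachable a b) : ∃ c, H.Adj a c ∧ (c = b ∨ ∃ d, H.Adj c d ∧ d ≠ a) := by
  classical
  obtain ⟨w⟩ := r
  obtain ⟨p, hp⟩ := w.toPath
  cases p with
  | nil => exact absurd rfl hab
  | cons h q =>
    rename_i c
    cases q with
    | nil => exact ⟨_, h, Or.inl rfl⟩
    | cons h2 q2 =>
      rename_i d
      refine ⟨c, h, Or.inr ⟨d, h2, ?_⟩⟩
      rw [SimpleGraph.Walk.cons_isPath_iff] at hp
      intro hda
      apply hp.2
      rw [SimpleGraph.Walk.support_cons]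
      exact List.mem_cons_of_mem _ (hda ▸ q2.start_mem_support)

lemma tree_cover {V : Type*} [Finite V] {G : SimpleGraph V} (T : G.Subgraph)
    (hT : T.coe.IsTree) (hinn : (inn T).Nonempty) {u : V} (hu : u ∈ T.verts) :
    ∃ v, v ∈ inn T ∧ (u = v ∨ T.Adj u v) := by
  by_cases hui : u ∈ inn T
  · exact ⟨u, hui, Or.inl rfl⟩
  obtain ⟨z, hz⟩ := hinn
  have huz : u ≠ z := fun h => hui (h ▸ hz)
  have hne : (⟨u, hu⟩ : T.verts) ≠ ⟨z, hz.1⟩ := fun h => huz (congrArg Subtype.val h)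
  obtain ⟨c, hc1, hc2⟩ := aux_reach hne (hT.isConnected.preconnected _ _)
  have hTuc : T.Adj u (c : V) := (SimpleGraph.Subgraph.coe_adj T _ c).mp hc1
  rcases hc2 with rfl | ⟨d, hd, hda⟩
  · exact ⟨z, hz, Or.inr hTuc⟩
  · refine ⟨c, ⟨c.2, ?_⟩, Or.inr hTuc⟩
    have hcu : T.Adj (c : V) u := hTuc.symm
    have hcd : T.Adj (c : V) (d : V) := (SimpleGraph.Subgraph.coe_adj T c d).mp hd
    have hud : u ≠ (d : V) := fun h => hda (Subtype.ext h.symm)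
    have hsub : ({u, (d : V)} : Set V) ⊆ T.neighborSet (c : V) := by
      rintro x (rfl | rfl)
      · exact hcu
      · exact hcd
    calc 2 = ({u, (d : V)} : Set V).ncard := (Set.ncard_pair hud).symm
      _ ≤ (T.neighborSet (c : V)).ncard := Set.ncard_le_ncard hsub (Set.toFinite _)

/-- an independent set of members has size at most `5·|in(T)|`. -/
theorem stmt10 (P : Finset (EuclideanSpace ℝ (Fin 2))) (M : Set P)
    (T : (unitDiskGraph P).Subgraph) (hT : T.coe.IsTree) (hM : M ⊆ T.verts)
    (hinn : (inn T).Nonempty) (C : Set P) (hCM : C ⊆ M)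
    (hind : C.Pairwise fun u v => ¬ (unitDiskGraph P).Adj u v) :
    C.ncard ≤ 5 * (inn T).ncard := by
  classical
  have claim : ∀ c : P, c ∈ C → ∃ v, v ∈ inn T ∧ (c = v ∨ T.Adj c v) :=
    fun c hc => tree_cover T hT hinn (hM (hCM hc))
  set f : P → P := fun c =>
    if h : ∃ v, v ∈ inn T ∧ ((c : {x // x ∈ P}) = v ∨ T.Adj c v) then h.choose
    else hinn.choose with hf
  have hfspec : ∀ c : P, c ∈ C → f c ∈ inn T ∧ (c = f c ∨ T.Adj c (f c)) := by
    intro c hc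
    have h := claim c hc
    simp only [hf, dif_pos h]
    exact ⟨h.choose_spec.1, h.choose_spec.2⟩
  have hCfin : C.Finite := Set.toFinite C
  have hIfin : (inn T).Finite := Set.toFinite _
  rw [Set.ncard_eq_toFinset_card C hCfin, Set.ncard_eq_toFinset_card _ hIfin]
  apply Finset.card_le_mul_card_image_of_maps_to
  · intro a ha
    rw [Set.Finite.mem_toFinset] at ha ⊢
    exact (hfspec a ha).1
  · intro v hv
    rw [Set.Finite.mem_toFinset] at hv
    have hfib : ∀ a, a ∈ {a ∈ hCfin.toFinset | f a = v} →
        a ∈ C ∧ (a = v ∨ (unitDiskGraph P).Adj a v) := by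
      intro a ha
      rw [Finset.mem_filter, Set.Finite.mem_toFinset] at ha
      obtain ⟨haC, hfa⟩ := ha
      have := (hfspec a haC).2
      rw [hfa] at this
      exact ⟨haC, this.imp id (fun h => T.adj_sub h)⟩
    by_cases hvC : v ∈ C ∧ f v = v
    · -- fiber is just {v}
      have : {a ∈ hCfin.toFinset | f a = v} ⊆ {v} := by
        intro a ha
        obtain ⟨haC, hav⟩ := hfib a ha
        rcases hav with rfl | hadj
        · exact Finset.mem_singleton_self _
        · rcases eq_or_ne a v with rfl | hne
          · exact Finset.mem_singleton_self _
          · exact absurd hadj (hind haC hvC.1 hne)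
      calc {a ∈ hCfin.toFinset | f a = v}.card ≤ ({v} : Finset P).card :=
            Finset.card_le_card this
        _ ≤ 5 := by simp
    · -- v not in the fiber; all fiber elements are adjacent to v
      have hvnot : ∀ a, a ∈ {a ∈ hCfin.toFinset | f a = v} → a ≠ v := by
        intro a ha hav
        rw [Finset.mem_filter, Set.Finite.mem_toFinset] at ha
        exact hvC ⟨hav ▸ ha.1, hav ▸ ha.2⟩
      set S := {a ∈ hCfin.toFinset | f a = v}
      have hcard : (S.image (Subtype.val)).card = S.card :=
        Finset.card_image_of_injective _ Subtype.val_injective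
      rw [← hcard]
      apply euc5 (v : EuclideanSpace ℝ (Fin 2))
      · intro c hc
        obtain ⟨a, haS, rfl⟩ := Finset.mem_image.mp hc
        have hav := hvnot a haS
        obtain ⟨haC, hadj⟩ := hfib a haS
        rcases hadj with rfl | hadj
        · exact absurd rfl hav
        · exact ⟨fun h => hav (Subtype.ext h), hadj.2⟩
      · intro x hx y hy hxy
        obtain ⟨a, haS, rfl⟩ := Finset.mem_image.mp hx
        obtain ⟨b, hbS, rfl⟩ := Finset.mem_image.mp hy
        have hab : a ≠ b := fun h => hxy (by rw [h])
        have hnadj := hind (hfib a haS).1 (hfib b hbS).1 hab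
        by_contra hle
        push_neg at hle
        exact hnadj ⟨hab, hle⟩

end MEGCOM
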